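/- Let n ≥ 1, m, r ∈ ℕ₀, and let v ∈ ℂ[x_1,…,x_n, y_1,…,y_n, q_1,…,q_n] be a polynomial that is homogeneous of total degree m in the variables x_1,…,x_n, y_1,…,y_n (i.e. E v = m v where E = Σ_j (x_j∂_{x_j}+y_j∂_{y_j})) and satisfies D_s v = 0, where D_s = Σ_j (i q_j ∂_{y_j} − ∂_{x_j} ∂_{q_j}). Then D_s X_s^r v = −i · (r(2m + 2n + r − 1)/2) · X_s^{r−1} v, where X_s = Σ_j (i x_j q_j + y_j ∂_{q_j}). -/

import Mathlib

noncomputable section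
open MvPolynomial

/-- Variables: x_1..x_n (inl), y_1..y_n (inr inl), q_1..q_n (inr inr). -/
abbrev V3 (n : ℕ) := Fin n ⊕ Fin n ⊕ Fin n
abbrev R3 (n : ℕ) := MvPolynomial (V3 n) ℂ
abbrev Op3 (n : ℕ) := Module.End ℂ (R3 n)

def mX {n : ℕ} (j : Fin n) : Op3 n := LinearMap.mulLeft ℂ (X (Sum.inl j))
def mY {n : ℕ} (j : Fin n) : Op3 n := LinearMap.mulLeft ℂ (X (Sum.inr (Sum.inl j)))
def mQ {n : ℕ} (j : Fin n) : Op3 n := LinearMap.mulLeft ℂ (X (Sum.inr (Sum.inr j)))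
def dX {n : ℕ} (j : Fin n) : Op3 n := (pderiv (Sum.inl j)).toLinearMap
def dY {n : ℕ} (j : Fin n) : Op3 n := (pderiv (Sum.inr (Sum.inl j))).toLinearMap
def dQ {n : ℕ} (j : Fin n) : Op3 n := (pderiv (Sum.inr (Sum.inr j))).toLinearMap

/-- The symplectic Dirac operator D_s = Σ_j (i q_j ∂_{y_j} − ∂_{x_j} ∂_{q_j}). -/
def Ds (n : ℕ) : Op3 n := ∑ j : Fin n, (Complex.I • (mQ j * dY j) - dX j * dQ j)
/-- The Euler operator E = Σ_j (x_j ∂_{x_j} + y_j ∂_{y_j}). -/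
def Eop (n : ℕ) : Op3 n := ∑ j : Fin n, (mX j * dX j + mY j * dY j)
/-- X_s = Σ_j (i x_j q_j + y_j ∂_{q_j}). -/
def Xs (n : ℕ) : Op3 n := ∑ j : Fin n, (Complex.I • (mX j * mQ j) + mY j * dQ j)

lemma pderiv_swap {σ : Type*} [DecidableEq σ] (i j : σ) (p : MvPolynomial σ ℂ) :
    pderiv i (pderiv j p) = pderiv j (pderiv i p) := by
  induction p using MvPolynomial.induction_on with
  | C a => simp
  | add p q hp hq => simp [hp, hq]
  | mul_X p k hp =>
    simp [pderiv_mul, hp, Pi.single_apply]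
    split_ifs <;> (try simp only [map_zero]) <;> ring

lemma pairDs {n : ℕ} (j k : Fin n) :
    (Complex.I • (mQ j * dY j) - dX j * dQ j) * (Complex.I • (mX k * mQ k) + mY k * dQ k)
      - (Complex.I • (mX k * mQ k) + mY k * dQ k) * (Complex.I • (mQ j * dY j) - dX j * dQ j)
    = if j = k then (-Complex.I) • (mX j * dX j + mY j * dY j + 1) else 0 := by
  refine LinearMap.ext fun p => ?_
  rcases eq_or_ne j k with h | h
  · subst h
    simp only [if_pos rfl, mX, mY, mQ, dX, dY, dQ]
    simp [LinearMap.sub_apply, LinearMap.add_apply, Module.End.mul_apply, LinearMap.smul_apply,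
      LinearMap.mulLeft_apply, Module.End.one_apply, map_add, map_sub, map_smul, pderiv_mul,
      pderiv_X, smul_eq_C_mul, pderiv_C_mul]
    simp only [pderiv_swap (Sum.inl j) (Sum.inr (Sum.inr j)),
      pderiv_swap (Sum.inr (Sum.inl j)) (Sum.inr (Sum.inr j))]
    ring
  · simp only [if_neg h, mX, mY, mQ, dX, dY, dQ]
    simp [LinearMap.sub_apply, LinearMap.add_apply, Module.End.mul_apply, LinearMap.smul_apply,
      LinearMap.mulLeft_apply, map_add, map_sub, map_smul, pderiv_mul,
      pderiv_X, smul_eq_C_mul, pderiv_C_mul, h, h.symm]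
    simp only [pderiv_swap (Sum.inl j) (Sum.inr (Sum.inr j)),
      pderiv_swap (Sum.inl j) (Sum.inr (Sum.inr k)),
      pderiv_swap (Sum.inr (Sum.inl j)) (Sum.inr (Sum.inr k)),
      pderiv_swap (Sum.inr (Sum.inr j)) (Sum.inr (Sum.inr k))]
    ring

lemma pairE {n : ℕ} (j k : Fin n) :
    (mX j * dX j + mY j * dY j) * (Complex.I • (mX k * mQ k) + mY k * dQ k)
      - (Complex.I • (mX k * mQ k) + mY k * dQ k) * (mX j * dX j + mY j * dY j)
    = if j = k then (Complex.I • (mX j * mQ j) + mY j * dQ j) else 0 := by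
  refine LinearMap.ext fun p => ?_
  rcases eq_or_ne j k with h | h
  · subst h
    simp only [if_pos rfl, mX, mY, mQ, dX, dY, dQ]
    simp [LinearMap.sub_apply, LinearMap.add_apply, Module.End.mul_apply, LinearMap.smul_apply,
      LinearMap.mulLeft_apply, map_add, map_sub, map_smul, pderiv_mul,
      pderiv_X, smul_eq_C_mul, pderiv_C_mul]
    simp only [pderiv_swap (Sum.inl j) (Sum.inr (Sum.inr j)),
      pderiv_swap (Sum.inr (Sum.inl j)) (Sum.inr (Sum.inr j))]
    ring
  · simp only [if_neg h, mX, mY, mQ, dX, dY, dQ]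
    simp [LinearMap.sub_apply, LinearMap.add_apply, Module.End.mul_apply, LinearMap.smul_apply,
      LinearMap.mulLeft_apply, map_add, map_sub, map_smul, pderiv_mul,
      pderiv_X, smul_eq_C_mul, pderiv_C_mul, h, h.symm]
    simp only [pderiv_swap (Sum.inl j) (Sum.inr (Sum.inr k)),
      pderiv_swap (Sum.inr (Sum.inl j)) (Sum.inr (Sum.inr k))]
    ring

lemma Ds_Xs_comm (n : ℕ) :
    Ds n * Xs n - Xs n * Ds n = (-Complex.I) • (Eop n + (n : ℂ) • (1 : Op3 n)) := by
  have h1 : Xs n * Ds n = ∑ j : Fin n, ∑ k : Fin n,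
      (Complex.I • (mX k * mQ k) + mY k * dQ k) * (Complex.I • (mQ j * dY j) - dX j * dQ j) := by
    rw [Xs, Ds, Finset.sum_mul_sum]
    exact Finset.sum_comm
  rw [h1, Ds, Xs, Finset.sum_mul_sum]
  rw [← Finset.sum_sub_distrib]
  simp_rw [← Finset.sum_sub_distrib, pairDs, Finset.sum_ite_eq, Finset.mem_univ, if_pos]
  rw [← Finset.smul_sum, Finset.sum_add_distrib, Finset.sum_const, Finset.card_univ,
    Fintype.card_fin, ← Eop, Nat.cast_smul_eq_nsmul]

lemma Eop_Xs_comm (n : ℕ) : Eop n * Xs n - Xs n * Eop n = Xs n := by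
  have h1 : Xs n * Eop n = ∑ j : Fin n, ∑ k : Fin n,
      (Complex.I • (mX k * mQ k) + mY k * dQ k) * (mX j * dX j + mY j * dY j) := by
    rw [Xs, Eop, Finset.sum_mul_sum]
    exact Finset.sum_comm
  rw [h1, Eop, Xs, Finset.sum_mul_sum]
  rw [← Finset.sum_sub_distrib]
  simp_rw [← Finset.sum_sub_distrib, pairE, Finset.sum_ite_eq, Finset.mem_univ, if_pos]

lemma Eop_Xs_pow (n : ℕ) (m : ℕ) (v : R3 n) (hhom : Eop n v = (m : ℂ) • v) (r : ℕ) :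
    Eop n ((Xs n ^ r) v) = ((m : ℂ) + r) • (Xs n ^ r) v := by
  induction r with
  | zero => simpa using hhom
  | succ r ih =>
    have hc := congrArg (fun T : Op3 n => T ((Xs n ^ r) v)) (Eop_Xs_comm n)
    simp only [LinearMap.sub_apply, Module.End.mul_apply] at hc
    rw [pow_succ', Module.End.mul_apply, sub_eq_iff_eq_add.mp hc, ih, map_smul]
    push_cast
    module

/-- If E v = m v and D_s v = 0, then
D_s X_s^r v = −i (r(2m+2n+r−1)/2) X_s^{r−1} v. -/
theorem Ds_Xs_pow (n : ℕ) (hn : 1 ≤ n) (m r : ℕ) (v : R3 n)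
    (hhom : Eop n v = (m : ℂ) • v) (hker : Ds n v = 0) :
    Ds n ((Xs n ^ r) v)
      = (-(Complex.I) * ((r : ℂ) * (2 * (m : ℂ) + 2 * (n : ℂ) + (r : ℂ) - 1)) / 2)
          • (Xs n ^ (r - 1)) v := by
  induction r with
  | zero => simp [hker]
  | succ r ih =>
    have hc := congrArg (fun T : Op3 n => T ((Xs n ^ r) v)) (Ds_Xs_comm n)
    simp only [LinearMap.sub_apply, Module.End.mul_apply, LinearMap.smul_apply,
      LinearMap.add_apply, Module.End.one_apply] at hc
    rw [pow_succ', Module.End.mul_apply, sub_eq_iff_eq_add.mp hc, ih, map_smul,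
      Eop_Xs_pow n m v hhom r]
    have hfix : (-(Complex.I) * ((r : ℂ) * (2 * (m : ℂ) + 2 * (n : ℂ) + (r : ℂ) - 1)) / 2)
          • (Xs n) ((Xs n ^ (r - 1)) v)
        = (-(Complex.I) * ((r : ℂ) * (2 * (m : ℂ) + 2 * (n : ℂ) + (r : ℂ) - 1)) / 2)
          • ((Xs n ^ r) v) := by
      cases r with
      | zero => simp
      | succ t =>
        refine congrArg (_ • ·) ?_
        rw [Nat.succ_sub_one, ← Module.End.mul_apply, ← pow_succ']
    rw [hfix, Nat.add_sub_cancel]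
    rw [smul_add, smul_smul, smul_smul, ← add_smul, ← add_smul]
    congr 1
    push_cast
    ring
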